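/- The √k-approximation greedy allocation for single-minded bidders is value-monotone: if bidder i wins with bid v_i, she also wins with any bid v' ≥ v_i, all else fixed. -/

import Mathlib

/-- Greedy single-minded allocation: process bidders in the given list order,
granting bidder `j` her bundle `S j` iff it is disjoint from the set of already
used items. Returns the set of granted (winning) bidders. -/
def greedyWinners {ι : Type*} [DecidableEq ι] (S : ι → Finset ℕ) :
    List ι → Finset ℕ → Finset ι
  | [], _ => ∅
  | j :: rest, used =>
      if Disjoint (S j) used then insert j (greedyWinners S rest (used ∪ S j))
      else greedyWinners S rest used

/-- `L` is a valid greedy order of all bidders for bids `v`: it lists every bidder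
exactly once, sorted by nonincreasing score `v j / √|S j|`, with ties broken by a
fixed injective priority `π`. -/
def sortedOrder {ι : Type*} [Fintype ι] (S : ι → Finset ℕ) (π : ι → ℕ)
    (v : ι → ℝ) (L : List ι) : Prop :=
  L.Nodup ∧ (∀ j : ι, j ∈ L) ∧
    L.Pairwise (fun a b =>
      v b / Real.sqrt ((S b).card) < v a / Real.sqrt ((S a).card) ∨
        (v a / Real.sqrt ((S a).card) = v b / Real.sqrt ((S b).card) ∧ π a < π b))

/-! ### Auxiliary machinery -/

/-- The lexicographic "comes strictly earlier" relation. -/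
def lexr {ι : Type*} (f : ι → ℝ) (π : ι → ℕ) (a b : ι) : Prop :=
  f b < f a ∨ (f a = f b ∧ π a < π b)

lemma lexr_trans {ι : Type*} (f : ι → ℝ) (π : ι → ℕ) :
    Transitive (lexr f π) := by
  rintro a b c (h1 | ⟨h1, h1'⟩) (h2 | ⟨h2, h2'⟩)
  · exact Or.inl (h2.trans h1)
  · exact Or.inl (h2 ▸ h1)
  · exact Or.inl (h1 ▸ h2)
  · exact Or.inr ⟨h1.trans h2, h1'.trans h2'⟩

lemma lexr_asymm {ι : Type*} (f : ι → ℝ) (π : ι → ℕ) :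
    ∀ a b, lexr f π a b → ¬ lexr f π b a := by
  rintro a b (h1 | ⟨h1, h1'⟩) (h2 | ⟨h2, h2'⟩)
  · exact absurd (h1.trans h2) (lt_irrefl _)
  · exact absurd h1 (h2 ▸ lt_irrefl _)
  · exact absurd h2 (h1 ▸ lt_irrefl _)
  · exact absurd (h1'.trans h2') (lt_irrefl _)

lemma lexr_irrefl {ι : Type*} (f : ι → ℝ) (π : ι → ℕ) (a : ι) :
    ¬ lexr f π a a := fun h => lexr_asymm f π a a h h

/-- The set of used items after greedily processing the list `l`. -/
def prefUsed {ι : Type*} (S : ι → Finset ℕ) : List ι → Finset ℕ → Finset ℕ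
  | [], u => u
  | j :: rest, u =>
      if Disjoint (S j) u then prefUsed S rest (u ∪ S j) else prefUsed S rest u

lemma subset_prefUsed {ι : Type*} (S : ι → Finset ℕ) :
    ∀ (l : List ι) (u : Finset ℕ), u ⊆ prefUsed S l u := by
  intro l
  induction l with
  | nil => intro u; simp [prefUsed]
  | cons j rest ih =>
      intro u
      simp only [prefUsed]
      split
      · exact Finset.subset_union_left.trans (ih (u ∪ S j))
      · exact ih u

lemma prefUsed_append {ι : Type*} (S : ι → Finset ℕ) :
    ∀ (l₁ l₂ : List ι) (u : Finset ℕ),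
      prefUsed S (l₁ ++ l₂) u = prefUsed S l₂ (prefUsed S l₁ u) := by
  intro l₁
  induction l₁ with
  | nil => intro l₂ u; simp [prefUsed]
  | cons j rest ih =>
      intro l₂ u
      simp only [prefUsed, List.cons_append]
      split <;> apply ih

lemma not_mem_greedyWinners {ι : Type*} [DecidableEq ι] (S : ι → Finset ℕ) (i : ι) :
    ∀ (l : List ι) (u : Finset ℕ), i ∉ l → i ∉ greedyWinners S l u := by
  intro l
  induction l with
  | nil => intro u _; simp [greedyWinners]
  | cons j rest ih =>
      intro u hi
      have hij : i ≠ j := fun h => hi (h ▸ List.mem_cons_self (a := j) (l := rest))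
      have hir : i ∉ rest := fun h => hi (List.mem_cons_of_mem j h)
      simp only [greedyWinners]
      split
      · intro h
        rcases Finset.mem_insert.mp h with h | h
        · exact hij h
        · exact ih _ hir h
      · exact ih _ hir

lemma mem_greedyWinners_iff {ι : Type*} [DecidableEq ι] (S : ι → Finset ℕ) (i : ι)
    (l₂ : List ι) (h2 : i ∉ l₂) :
    ∀ (l₁ : List ι) (u : Finset ℕ), i ∉ l₁ →
      (i ∈ greedyWinners S (l₁ ++ i :: l₂) u ↔ Disjoint (S i) (prefUsed S l₁ u)) := by
  intro l₁
  induction l₁ with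
  | nil =>
      intro u _
      by_cases h : Disjoint (S i) u
      · simp [greedyWinners, prefUsed, h]
      · simp only [List.nil_append, greedyWinners, prefUsed, if_neg h, h, iff_false]
        exact not_mem_greedyWinners S i l₂ u h2
  | cons j rest ih =>
      intro u hi
      have hij : i ≠ j := fun h => hi (h ▸ List.mem_cons_self (a := j) (l := rest))
      have hir : i ∉ rest := fun h => hi (List.mem_cons_of_mem j h)
      simp only [List.cons_append, greedyWinners, prefUsed]
      split
      · rw [Finset.mem_insert]
        simp only [hij, false_or]
        exact ih _ hir
      · exact ih _ hir

/-- A sorted, downward-closed sublist of a sorted list is a prefix. -/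
lemma prefix_of_sorted {α : Type*} (r : α → α → Prop)
    (hasym : ∀ a b, r a b → ¬ r b a) :
    ∀ (P P' : List α), P.Pairwise r → P'.Pairwise r → P.Nodup → P'.Nodup →
      (∀ x ∈ P', x ∈ P) → (∀ k j, j ∈ P' → k ∈ P → r k j → k ∈ P') →
      P' <+: P := by
  intro P
  induction P with
  | nil =>
      intro P' _ _ _ _ hsub _
      have : P' = [] := List.eq_nil_iff_forall_not_mem.mpr fun x hx => by
        simpa using hsub x hx
      simp [this]
  | cons a t ih =>
      intro P' hsP hsP' hnP hnP' hsub hdc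
      cases P' with
      | nil => exact List.nil_prefix
      | cons b t' =>
          have hb : b ∈ a :: t := hsub b (List.mem_cons_self (a := b) (l := t'))
          by_cases hba : b = a
          · subst hba
            have ht' : t' <+: t := by
              apply ih t' (List.pairwise_cons.mp hsP).2 (List.pairwise_cons.mp hsP').2
                (List.nodup_cons.mp hnP).2 (List.nodup_cons.mp hnP').2
              · intro x hx
                have hxb : x ≠ b := fun h => (List.nodup_cons.mp hnP').1 (h ▸ hx)
                rcases List.mem_cons.mp (hsub x (List.mem_cons_of_mem b hx)) with h | h
                · exact absurd h hxb
                · exact h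
              · intro k j hj hk hr
                have hk' : k ∈ b :: t' :=
                  hdc k j (List.mem_cons_of_mem b hj) (List.mem_cons_of_mem b hk) hr
                rcases List.mem_cons.mp hk' with h | h
                · exact absurd (h ▸ hk) (List.nodup_cons.mp hnP).1
                · exact h
            obtain ⟨R, hR⟩ := ht'
            exact ⟨R, by simp [hR]⟩
          · exfalso
            have hbt : b ∈ t := by
              rcases List.mem_cons.mp hb with h | h
              · exact absurd h hba
              · exact h
            have hab : r a b := (List.pairwise_cons.mp hsP).1 b hbt
            have : a ∈ b :: t' :=
              hdc a b (List.mem_cons_self (a := b) (l := t')) (List.mem_cons_self (a := a) (l := t)) hab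
            rcases List.mem_cons.mp this with h | h
            · exact hba h.symm
            · exact hasym a b hab ((List.pairwise_cons.mp hsP').1 a h)

/-- The √k-approximation greedy allocation for single-minded bidders is
value-monotone: if bidder `i` wins with bid `v i`, she also wins with any bid
`v' ≥ v i`, all else fixed. -/
theorem greedy_value_monotone {ι : Type*} [Fintype ι] [DecidableEq ι]
    (S : ι → Finset ℕ) (π : ι → ℕ) (hπ : Function.Injective π)
    (v : ι → ℝ) (i : ι) (v' : ℝ) (hv' : v i ≤ v')
    (L L' : List ι)
    (hL : sortedOrder S π v L)
    (hL' : sortedOrder S π (Function.update v i v') L')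
    (hwin : i ∈ greedyWinners S L ∅) :
    i ∈ greedyWinners S L' ∅ := by
  classical
  obtain ⟨hnd, hmem, hsort⟩ := hL
  obtain ⟨hnd', hmem', hsort'⟩ := hL'
  set f : ι → ℝ := fun j => v j / Real.sqrt ((S j).card) with hf
  set f' : ι → ℝ := fun j => (Function.update v i v') j / Real.sqrt ((S j).card) with hf'
  have hsort : L.Pairwise (lexr f π) := hsort
  have hsort' : L'.Pairwise (lexr f' π) := hsort'
  -- facts about scores
  have hfi : f i ≤ f' i := by
    simp only [hf, hf', Function.update_self]
    rw [div_eq_mul_inv, div_eq_mul_inv]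
    exact mul_le_mul_of_nonneg_right hv' (inv_nonneg.mpr (Real.sqrt_nonneg _))
  have hfj : ∀ j, j ≠ i → f' j = f j := by
    intro j hj
    simp [hf, hf', Function.update_of_ne hj]
  have himp : ∀ j, j ≠ i → lexr f' π j i → lexr f π j i := by
    intro j hj h
    rw [lexr, hfj j hj] at h
    rcases h with h | ⟨h, h'⟩
    · exact Or.inl (lt_of_le_of_lt hfi h)
    · rcases lt_or_eq_of_le (hfi.trans_eq h.symm) with hlt | heq
      · exact Or.inl hlt
      · exact Or.inr ⟨heq.symm, h'⟩
  -- decompose L and L'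
  obtain ⟨P, Q, rfl⟩ := List.append_of_mem (hmem i)
  obtain ⟨P', Q', rfl⟩ := List.append_of_mem (hmem' i)
  have hndP := List.nodup_append'.mp hnd
  have hndP' := List.nodup_append'.mp hnd'
  have hiP : i ∉ P := fun h => hndP.2.2 h (List.mem_cons_self (a := i) (l := Q))
  have hiQ : i ∉ Q := (List.nodup_cons.mp hndP.2.1).1
  have hiP' : i ∉ P' := fun h => hndP'.2.2 h (List.mem_cons_self (a := i) (l := Q'))
  have hiQ' : i ∉ Q' := (List.nodup_cons.mp hndP'.2.1).1
  have hpw := List.pairwise_append.mp hsort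
  have hpw' := List.pairwise_append.mp hsort'
  -- everything in P is before i; everything in Q is after
  have hPbef : ∀ j ∈ P, lexr f π j i := fun j hj =>
    hpw.2.2 j hj i (List.mem_cons_self (a := i) (l := Q))
  have hP'bef : ∀ j ∈ P', lexr f' π j i := fun j hj =>
    hpw'.2.2 j hj i (List.mem_cons_self (a := i) (l := Q'))
  have hQaft : ∀ j ∈ Q, lexr f π i j := fun j hj =>
    (List.pairwise_cons.mp hpw.2.1).1 j hj
  have hQ'aft : ∀ j ∈ Q', lexr f' π i j := fun j hj =>
    (List.pairwise_cons.mp hpw'.2.1).1 j hj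
  -- membership characterizations
  have hcharP : ∀ j, lexr f π j i → j ∈ P := by
    intro j hj
    rcases List.mem_append.mp (hmem j) with h | h
    · exact h
    rcases List.mem_cons.mp h with h | h
    · exact absurd (h ▸ hj) (lexr_irrefl f π i)
    · exact absurd hj (lexr_asymm f π i j (hQaft j h))
  have hcharP' : ∀ j, lexr f' π j i → j ∈ P' := by
    intro j hj
    rcases List.mem_append.mp (hmem' j) with h | h
    · exact h
    rcases List.mem_cons.mp h with h | h
    · exact absurd (h ▸ hj) (lexr_irrefl f' π i)
    · exact absurd hj (lexr_asymm f' π i j (hQ'aft j h))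
  have hP'ne : ∀ j ∈ P', j ≠ i := by
    intro j hj h
    exact lexr_irrefl f' π i (h ▸ hP'bef j hj)
  have hPne : ∀ j ∈ P, j ≠ i := by
    intro j hj h
    exact lexr_irrefl f π i (h ▸ hPbef j hj)
  -- P' is a prefix of P
  have hprefix : P' <+: P := by
    apply prefix_of_sorted (lexr f π) (lexr_asymm f π) P P'
      hpw.1
      (by
        refine List.Pairwise.imp_of_mem ?_ hpw'.1
        intro a b ha hb hab
        rw [lexr, hfj a (hP'ne a ha), hfj b (hP'ne b hb)] at hab
        exact hab)
      hndP.1 hndP'.1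
    · intro x hx
      exact hcharP x (himp x (hP'ne x hx) (hP'bef x hx))
    · intro k j hj hk hr
      -- r' k j holds since k, j ≠ i
      have hkne := hPne k hk
      have hr' : lexr f' π k j := by
        rw [lexr, hfj k hkne, hfj j (hP'ne j hj)]
        exact hr
      exact hcharP' k (lexr_trans f' π hr' (hP'bef j hj))
  obtain ⟨R, hR⟩ := hprefix
  -- conclude via the used-set characterization
  rw [mem_greedyWinners_iff S i Q hiQ P ∅ hiP] at hwin
  rw [mem_greedyWinners_iff S i Q' hiQ' P' ∅ hiP']
  have hsub : prefUsed S P' ∅ ⊆ prefUsed S P ∅ := by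
    rw [← hR, prefUsed_append]
    exact subset_prefUsed S R _
  exact Finset.disjoint_of_subset_right hsub hwin
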